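/- Let n ≥ 2 be an integer, a > 0, T > 0, and let f be a positive, twice differentiable real-valued function on [0, T) satisfying f''(t) = (n−1)·coth(f(t))·(1+f'(t)²) for all t, with f(0) = a and f'(0) = 0. Then for every t ∈ [0, T) one has λ(a, f(t)) = t, i.e. sinh^{n−1}(a) · ∫_a^{f(t)} (sinh^{2n−2}(u) − sinh^{2n−2}(a))^{−1/2} du = t. -/

import Mathlib

open MeasureTheory Real Set Filter intervalIntegral


noncomputable def gg (a : ℝ) (m : ℕ) (u : ℝ) : ℝ :=
  1 / Real.sqrt (Real.sinh u ^ m - Real.sinh a ^ m)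

lemma gg_nonneg (a : ℝ) (m : ℕ) (u : ℝ) : 0 ≤ gg a m u := by
  unfold gg; positivity

lemma gg_meas (a : ℝ) (m : ℕ) : Measurable (gg a m) := by
  unfold gg; fun_prop

lemma lower_bound {a : ℝ} (ha : 0 < a) {m : ℕ} (hm : 1 ≤ m) {u : ℝ} (hu : a ≤ u) :
    (m : ℝ) * Real.sinh a ^ (m - 1) * (u - a) ≤ Real.sinh u ^ m - Real.sinh a ^ m := by
  set c : ℝ := (m : ℝ) * Real.sinh a ^ (m - 1) with hc
  have hmono : MonotoneOn (fun u => Real.sinh u ^ m - c * u) (Ici a) := by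
    apply monotoneOn_of_deriv_nonneg (convex_Ici a)
    · exact (Continuous.continuousOn (by fun_prop))
    · intro x hx
      exact (((Real.hasDerivAt_sinh x).pow m).sub ((hasDerivAt_id x).const_mul c)).differentiableAt.differentiableWithinAt
    · intro x hx
      rw [interior_Ici] at hx
      have hd : HasDerivAt (fun u => Real.sinh u ^ m - c * u)
          ((m : ℝ) * Real.sinh x ^ (m - 1) * Real.cosh x - c * 1) x :=
        ((Real.hasDerivAt_sinh x).pow m).sub ((hasDerivAt_id x).const_mul c)
      rw [hd.deriv]
      have h1 : Real.sinh a ^ (m-1) ≤ Real.sinh x ^ (m-1) :=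
        pow_le_pow_left₀ (Real.sinh_nonneg_iff.mpr ha.le) (Real.sinh_le_sinh.mpr (le_of_lt hx)) _
      have h2 : (1:ℝ) ≤ Real.cosh x := Real.one_le_cosh x
      have h3 : (0:ℝ) ≤ Real.sinh a ^ (m-1) := by positivity
      have hsx : (0:ℝ) ≤ Real.sinh x ^ (m-1) := le_trans h3 h1
      have h4 : Real.sinh a ^ (m-1) * 1 ≤ Real.sinh x ^ (m-1) * Real.cosh x :=
        mul_le_mul h1 h2 zero_le_one hsx
      have h5 : (m:ℝ) * (Real.sinh a ^ (m-1) * 1) ≤ (m:ℝ) * (Real.sinh x ^ (m-1) * Real.cosh x) :=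
        mul_le_mul_of_nonneg_left h4 (by positivity)
      nlinarith [h5]
  have := hmono (self_mem_Ici) hu hu
  simp only at this
  linarith


lemma gg_bound {a : ℝ} (ha : 0 < a) {m : ℕ} (hm : 1 ≤ m) {u : ℝ} (hu : a ≤ u) :
    gg a m u ≤ (1 / Real.sqrt ((m : ℝ) * Real.sinh a ^ (m - 1))) * (u - a) ^ (-(1/2) : ℝ) := by
  have hc : (0:ℝ) < (m : ℝ) * Real.sinh a ^ (m - 1) := by
    have := Real.sinh_pos_iff.mpr ha
    have hm1 : (0:ℝ) < (m:ℝ) := by exact_mod_cast hm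
    positivity
  set c : ℝ := (m : ℝ) * Real.sinh a ^ (m - 1) with hcdef
  rcases eq_or_lt_of_le hu with rfl | hu'
  · simp [gg, Real.zero_rpow (by norm_num : (-(1/2):ℝ) ≠ 0)]
  · have hua : 0 < u - a := by linarith
    have hrw : (u - a) ^ (-(1/2) : ℝ) = (Real.sqrt (u - a))⁻¹ := by
      rw [Real.rpow_neg hua.le, Real.sqrt_eq_rpow]
    rw [hrw]
    have hlb := lower_bound ha hm hu
    have hsqrt : Real.sqrt c * Real.sqrt (u - a) ≤
        Real.sqrt (Real.sinh u ^ m - Real.sinh a ^ m) := by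
      rw [← Real.sqrt_mul hc.le]
      exact Real.sqrt_le_sqrt hlb
    have hpos : 0 < Real.sqrt c * Real.sqrt (u - a) := by positivity
    have : gg a m u ≤ 1 / (Real.sqrt c * Real.sqrt (u - a)) :=
      one_div_le_one_div_of_le hpos hsqrt
    calc gg a m u ≤ 1 / (Real.sqrt c * Real.sqrt (u - a)) := this
      _ = 1 / Real.sqrt c * (Real.sqrt (u - a))⁻¹ := by
          rw [one_div, mul_inv, one_div]

lemma rpow_shift_integrable (a ρ : ℝ) :
    IntervalIntegrable (fun u => (u - a) ^ (-(1/2) : ℝ)) volume a ρ := by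
  have h : IntervalIntegrable (fun x : ℝ => x ^ (-(1/2) : ℝ)) volume (a - a) (ρ - a) :=
    intervalIntegral.intervalIntegrable_rpow' (by norm_num)
  have := h.comp_sub_right a
  simpa using this

lemma gg_integrable {a : ℝ} (ha : 0 < a) {m : ℕ} (hm : 1 ≤ m) {ρ : ℝ} (hρ : a ≤ ρ) :
    IntervalIntegrable (gg a m) volume a ρ := by
  apply IntervalIntegrable.mono_fun
    (((rpow_shift_integrable a ρ).const_mul (1 / Real.sqrt ((m : ℝ) * Real.sinh a ^ (m - 1)))))
    ((gg_meas a m).aestronglyMeasurable.restrict)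
  rw [Filter.EventuallyLE, ae_restrict_iff' measurableSet_uIoc]
  filter_upwards with u hu
  rw [Set.uIoc_of_le hρ] at hu
  have h1 : ‖gg a m u‖ = gg a m u := Real.norm_of_nonneg (gg_nonneg a m u)
  have h2 : 0 ≤ (1 / Real.sqrt ((m : ℝ) * Real.sinh a ^ (m - 1))) * (u - a) ^ (-(1/2) : ℝ) := by
    have : (0:ℝ) ≤ (u - a) := by have := hu.1; linarith
    positivity
  rw [h1, Real.norm_of_nonneg h2]
  exact gg_bound ha hm hu.1.le

lemma rpow_shift_integral {a ρ : ℝ} (hρ : a ≤ ρ) :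
    ∫ u in a..ρ, (u - a) ^ (-(1/2) : ℝ) = 2 * Real.sqrt (ρ - a) := by
  rw [intervalIntegral.integral_comp_sub_right (fun x => x ^ (-(1/2):ℝ)) a]
  rw [integral_rpow (Or.inl (by norm_num))]
  rw [Real.sqrt_eq_rpow]
  norm_num
  ring

lemma gg_integral_bound {a : ℝ} (ha : 0 < a) {m : ℕ} (hm : 1 ≤ m) {ρ : ℝ} (hρ : a ≤ ρ) :
    ∫ u in a..ρ, gg a m u ≤
      (1 / Real.sqrt ((m : ℝ) * Real.sinh a ^ (m - 1))) * (2 * Real.sqrt (ρ - a)) := by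
  have h1 : ∫ u in a..ρ, gg a m u ≤
      ∫ u in a..ρ, (1 / Real.sqrt ((m : ℝ) * Real.sinh a ^ (m - 1))) * (u - a) ^ (-(1/2) : ℝ) := by
    apply intervalIntegral.integral_mono_on hρ (gg_integrable ha hm hρ)
      ((rpow_shift_integrable a ρ).const_mul _)
    intro u hu
    exact gg_bound ha hm hu.1
  rw [intervalIntegral.integral_const_mul, rpow_shift_integral hρ] at h1
  exact h1

lemma gg_contAt {a : ℝ} (ha : 0 < a) {m : ℕ} (hm : 1 ≤ m) {ρ : ℝ} (hρ : a < ρ) :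
    ContinuousAt (gg a m) ρ := by
  have hpos : 0 < Real.sinh ρ ^ m - Real.sinh a ^ m := by
    have h1 : Real.sinh a < Real.sinh ρ := Real.sinh_lt_sinh.mpr hρ
    have h2 : 0 < Real.sinh a := Real.sinh_pos_iff.mpr ha
    have := pow_lt_pow_left₀ h1 h2.le (by omega : m ≠ 0)
    linarith
  apply ContinuousAt.div continuousAt_const
  · exact (Real.continuous_sqrt.comp (by fun_prop)).continuousAt
  · exact (Real.sqrt_pos.mpr hpos).ne'

lemma gg_hasDeriv {a : ℝ} (ha : 0 < a) {m : ℕ} (hm : 1 ≤ m) {ρ : ℝ} (hρ : a < ρ) :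
    HasDerivAt (fun x => ∫ u in a..x, gg a m u) (gg a m ρ) ρ :=
  intervalIntegral.integral_hasDerivAt_right (gg_integrable ha hm hρ.le)
    ⟨Set.univ, Filter.univ_mem, (gg_meas a m).aestronglyMeasurable.restrict⟩
    (gg_contAt ha hm hρ)


/-- if `f` solves the catenoid ODE `f'' = (n-1) coth(f) (1 + f'^2)` on `[0, T)`
with `f(0) = a > 0`, `f'(0) = 0`, then `λ(a, f(t)) = t` for all `t ∈ [0, T)`, where
`λ(a, ρ) = sinh^{n-1}(a) ∫_a^ρ (sinh^{2n-2}(u) - sinh^{2n-2}(a))^{-1/2} du`. -/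
theorem stmt_3 (n : ℕ) (hn : 2 ≤ n) (a : ℝ) (ha : 0 < a) (T : ℝ) (hT : 0 < T)
    (f f' : ℝ → ℝ)
    (hfpos : ∀ t ∈ Set.Ico (0 : ℝ) T, 0 < f t)
    (hf' : ∀ t ∈ Set.Ico (0 : ℝ) T, HasDerivWithinAt f (f' t) (Set.Ico (0 : ℝ) T) t)
    (hf'' : ∀ t ∈ Set.Ico (0 : ℝ) T,
      HasDerivWithinAt f'
        (((n : ℝ) - 1) * (Real.cosh (f t) / Real.sinh (f t)) * (1 + f' t ^ 2))
        (Set.Ico (0 : ℝ) T) t)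
    (hfa : f 0 = a) (hf'0 : f' 0 = 0) :
    ∀ t ∈ Set.Ico (0 : ℝ) T,
      Real.sinh a ^ (n - 1) *
        ∫ u in a..(f t),
          1 / Real.sqrt (Real.sinh u ^ (2 * n - 2) - Real.sinh a ^ (2 * n - 2)) = t := by
  obtain ⟨m, hmdef⟩ : ∃ m, 2 * n - 2 = m := ⟨2 * n - 2, rfl⟩
  simp only [hmdef]
  have hm1 : 1 ≤ m := by omega
  have hmcast : (m : ℝ) = 2 * ((n : ℝ) - 1) := by
    rw [← hmdef]
    push_cast [Nat.cast_sub (by omega : 2 ≤ 2 * n)]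
    ring
  set s : Set ℝ := Set.Ico (0 : ℝ) T with hsdef
  have h0s : (0:ℝ) ∈ s := ⟨le_refl 0, hT⟩
  have hsinha : 0 < Real.sinh a := Real.sinh_pos_iff.mpr ha
  -- upgrade of within-derivatives to Ici
  have hups : ∀ x ∈ s, s ∈ nhdsWithin x (Set.Ici x) := by
    intro x hx
    apply Filter.mem_of_superset
      (Filter.inter_mem self_mem_nhdsWithin (nhdsWithin_le_nhds (Iio_mem_nhds hx.2)))
    exact fun y hy => ⟨le_trans hx.1 hy.1, hy.2⟩
  have hIooSub : Set.Ioo (0:ℝ) T ⊆ s := Set.Ioo_subset_Ico_self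
  -- pointwise HasDerivAt on the interior
  have hdf : ∀ x ∈ Set.Ioo (0:ℝ) T, HasDerivAt f (f' x) x := fun x hx =>
    (hf' x (hIooSub hx)).hasDerivAt (Ico_mem_nhds hx.1 hx.2)
  have hdf' : ∀ x ∈ Set.Ioo (0:ℝ) T, HasDerivAt f'
      (((n : ℝ) - 1) * (Real.cosh (f x) / Real.sinh (f x)) * (1 + f' x ^ 2)) x := fun x hx =>
    (hf'' x (hIooSub hx)).hasDerivAt (Ico_mem_nhds hx.1 hx.2)
  have hfc : ContinuousOn f s := fun x hx => (hf' x hx).continuousWithinAt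
  have hf'c : ContinuousOn f' s := fun x hx => (hf'' x hx).continuousWithinAt
  -- f' is strictly monotone, hence positive on (0,T)
  have hmono' : StrictMonoOn f' s := by
    apply strictMonoOn_of_deriv_pos (convex_Ico 0 T) hf'c
    intro x hx
    rw [interior_Ico] at hx
    rw [(hdf' x hx).deriv]
    have h1 : 0 < Real.sinh (f x) := Real.sinh_pos_iff.mpr (hfpos x (hIooSub hx))
    have h2 : (0:ℝ) < (n:ℝ) - 1 := by
      have : (2:ℝ) ≤ (n:ℝ) := by exact_mod_cast hn
      linarith
    have h3 : 0 < Real.cosh (f x) := Real.cosh_pos (f x)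
    positivity
  have hf'pos : ∀ t ∈ Set.Ioo (0:ℝ) T, 0 < f' t := by
    intro t ht
    have := hmono' h0s (hIooSub ht) ht.1
    rwa [hf'0] at this
  have hf'nonneg : ∀ t ∈ s, 0 ≤ f' t := by
    intro t ht
    rcases eq_or_lt_of_le ht.1 with h | h
    · rw [← h, hf'0]
    · exact (hf'pos t ⟨h, ht.2⟩).le
  -- f is strictly monotone
  have hmono : StrictMonoOn f s := by
    apply strictMonoOn_of_deriv_pos (convex_Ico 0 T) hfc
    intro x hx
    rw [interior_Ico] at hx
    rw [(hdf x hx).deriv]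
    exact hf'pos x hx
  have hfgt : ∀ t ∈ Set.Ioo (0:ℝ) T, a < f t := by
    intro t ht
    have := hmono h0s (hIooSub ht) ht.1
    rwa [hfa] at this
  have hfge : ∀ t ∈ s, a ≤ f t := by
    intro t ht
    rcases eq_or_lt_of_le ht.1 with h | h
    · rw [← h, hfa]
    · exact (hfgt t ⟨h, ht.2⟩).le
  -- energy conservation
  set E : ℝ → ℝ := fun t => Real.sinh (f t) ^ m / (1 + f' t ^ 2) with hEdef
  have hEderiv : ∀ x ∈ s, HasDerivWithinAt E 0 s x := by
    intro x hx
    have hsx : 0 < Real.sinh (f x) := Real.sinh_pos_iff.mpr (hfpos x hx)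
    have hN : HasDerivWithinAt (fun t => Real.sinh (f t) ^ m)
        ((m:ℝ) * Real.sinh (f x) ^ (m-1) * (Real.cosh (f x) * f' x)) s x :=
      ((Real.hasDerivAt_sinh (f x)).comp_hasDerivWithinAt x (hf' x hx)).pow m
    have hD := (hasDerivWithinAt_const x s (1:ℝ)).add ((hf'' x hx).pow 2)
    have hDne : (1 : ℝ) + f' x ^ 2 ≠ 0 := by positivity
    have hMain := hN.div hD hDne
    refine hMain.congr_deriv ?_
    have hsm : Real.sinh (f x) ^ m = Real.sinh (f x) ^ (m-1) * Real.sinh (f x) := by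
      rw [← pow_succ]; congr 1; omega
    rw [hsm, hmcast]
    simp only [Pi.add_apply, Pi.pow_apply]
    field_simp
    ring
  have hEconst : ∀ t ∈ s, Real.sinh (f t) ^ m = Real.sinh a ^ m * (1 + f' t ^ 2) := by
    intro t ht
    have hkey : E t = E 0 := by
      rcases eq_or_lt_of_le ht.1 with h | h
      · rw [← h]
      · have := constant_of_has_deriv_right_zero
          (f := E) (a := 0) (b := t)
          (fun x hx => (hEderiv x ⟨hx.1, lt_of_le_of_lt hx.2 ht.2⟩).continuousWithinAt.mono
            (fun y hy => ⟨hy.1, lt_of_le_of_lt hy.2 ht.2⟩))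
          (fun x hx => (hEderiv x ⟨hx.1, lt_trans hx.2 ht.2⟩).mono_of_mem_nhdsWithin
            (hups x ⟨hx.1, lt_trans hx.2 ht.2⟩))
        exact this t ⟨ht.1, le_refl t⟩
    have hE0 : E 0 = Real.sinh a ^ m := by
      rw [hEdef]; simp [hfa, hf'0]
    rw [hE0] at hkey
    have hDne : (1 : ℝ) + f' t ^ 2 ≠ 0 := by positivity
    rw [hEdef] at hkey
    field_simp at hkey
    linarith [hkey]
  -- the key square-root identity
  have hsq : ∀ t ∈ s, Real.sqrt (Real.sinh (f t) ^ m - Real.sinh a ^ m)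
      = Real.sinh a ^ (n-1) * f' t := by
    intro t ht
    have h1 : (Real.sinh a ^ (n-1))^2 = Real.sinh a ^ m := by
      rw [← pow_mul]; congr 1; omega
    have h2 : Real.sinh (f t) ^ m - Real.sinh a ^ m = (Real.sinh a ^ (n-1) * f' t)^2 := by
      rw [hEconst t ht, mul_pow, h1]; ring
    rw [h2, Real.sqrt_sq (mul_nonneg (by positivity) (hf'nonneg t ht))]
  -- derivative of the candidate function
  set F : ℝ → ℝ := fun t => Real.sinh a ^ (n-1) * ∫ u in a..(f t), gg a m u with hFdef
  have hF : ∀ t ∈ Set.Ioo (0:ℝ) T, HasDerivWithinAt F 1 s t := by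
    intro t ht
    have hts : t ∈ s := hIooSub ht
    have hft : a < f t := hfgt t ht
    have h1 := (gg_hasDeriv ha hm1 hft).comp_hasDerivWithinAt t (hf' t hts)
    have h2 := h1.const_mul (Real.sinh a ^ (n-1))
    have hval : Real.sinh a ^ (n-1) * (gg a m (f t) * f' t) = 1 := by
      have hgg : gg a m (f t) = 1 / (Real.sinh a ^ (n-1) * f' t) := by
        rw [gg, hsq t hts]
      rw [hgg]
      have hne : Real.sinh a ^ (n-1) * f' t ≠ 0 := by
        have := hf'pos t ht
        positivity
      field_simp
      exact div_self (hf'pos t ht).ne'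
    rw [hval] at h2
    exact h2
  -- conclusion
  intro t ht
  show F t = t
  rcases eq_or_lt_of_le ht.1 with h0 | h0
  · rw [hFdef]
    simp [← h0, hfa, intervalIntegral.integral_same]
  · -- limits as ε → 0⁺
    have hftend : Filter.Tendsto f (nhdsWithin 0 (Set.Ioi 0)) (nhds a) := by
      have hc0 : ContinuousWithinAt f s 0 := (hf' 0 h0s).continuousWithinAt
      have hmem : s ∈ nhdsWithin (0:ℝ) (Set.Ioi 0) :=
        Filter.mem_of_superset (Ioo_mem_nhdsGT_of_mem ⟨le_refl 0, hT⟩) hIooSub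
      have := hc0.tendsto.mono_left (nhdsWithin_le_of_mem hmem)
      rwa [hfa] at this
    have hsqrt_tend : Filter.Tendsto (fun ε => Real.sqrt (f ε - a))
        (nhdsWithin 0 (Set.Ioi 0)) (nhds 0) := by
      have h1 : Filter.Tendsto (fun ε => f ε - a) (nhdsWithin 0 (Set.Ioi 0)) (nhds 0) := by
        simpa using hftend.sub (tendsto_const_nhds (x := a))
      have := (Real.continuous_sqrt.tendsto 0).comp h1
      simpa [Function.comp_def] using this
    have hFlim : Filter.Tendsto F (nhdsWithin 0 (Set.Ioi 0)) (nhds 0) := by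
      have hbound : Filter.Tendsto (fun ε =>
          Real.sinh a ^ (n-1) * ((1 / Real.sqrt ((m : ℝ) * Real.sinh a ^ (m - 1))) *
            (2 * Real.sqrt (f ε - a)))) (nhdsWithin 0 (Set.Ioi 0)) (nhds 0) := by
        have := (tendsto_const_nhds (x := Real.sinh a ^ (n-1) *
            (1 / Real.sqrt ((m : ℝ) * Real.sinh a ^ (m - 1)) * 2))).mul hsqrt_tend
        simpa [mul_assoc, mul_comm, mul_left_comm] using this
      apply tendsto_of_tendsto_of_tendsto_of_le_of_le'
        (tendsto_const_nhds (x := (0:ℝ))) hbound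
      · filter_upwards [Ioo_mem_nhdsGT_of_mem (Set.mem_Ico.mpr ⟨le_refl (0:ℝ), hT⟩)] with ε hε
        rw [hFdef]
        have : 0 ≤ ∫ u in a..(f ε), gg a m u :=
          intervalIntegral.integral_nonneg (hfge ε (hIooSub hε)) (fun u _ => gg_nonneg a m u)
        positivity
      · filter_upwards [Ioo_mem_nhdsGT_of_mem (Set.mem_Ico.mpr ⟨le_refl (0:ℝ), hT⟩)] with ε hε
        exact mul_le_mul_of_nonneg_left (gg_integral_bound ha hm1 (hfge ε (hIooSub hε)))
          (by positivity)
    -- F t - t = F ε - ε for all ε ∈ (0, t]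
    have hconst : ∀ ε ∈ Set.Ioc (0:ℝ) t, F t - t = F ε - ε := by
      intro ε hε
      have hsub : Set.Icc ε t ⊆ Set.Ioo 0 T := fun y hy => ⟨lt_of_lt_of_le hε.1 hy.1,
        lt_of_le_of_lt hy.2 ht.2⟩
      have := constant_of_has_deriv_right_zero (f := fun s => F s - s) (a := ε) (b := t)
        (fun x hx => (((hF x (hsub hx)).sub (hasDerivWithinAt_id x s)).continuousWithinAt).mono
          (fun y hy => hIooSub (hsub hy)))
        (fun x hx => by
          have hxo : x ∈ Set.Ioo (0:ℝ) T := hsub ⟨hx.1, hx.2.le⟩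
          have hd := (hF x hxo).sub (hasDerivWithinAt_id x s)
          have : HasDerivWithinAt (fun s => F s - s) 0 s x := hd.congr_deriv (sub_self 1)
          exact this.mono_of_mem_nhdsWithin (hups x (hIooSub hxo)))
      have h2 := this t (Set.mem_Icc.mpr ⟨hε.2, le_refl t⟩)
      simpa using h2
    have htends1 : Filter.Tendsto (fun ε => F ε - ε) (nhdsWithin 0 (Set.Ioi 0))
        (nhds (F t - t)) := by
      apply Filter.Tendsto.congr' _ (tendsto_const_nhds (x := F t - t))
      filter_upwards [Ioc_mem_nhdsGT_of_mem (Set.mem_Ico.mpr ⟨le_refl (0:ℝ), h0⟩)] with ε hε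
      exact hconst ε hε
    have htends2 : Filter.Tendsto (fun ε => F ε - ε) (nhdsWithin 0 (Set.Ioi 0)) (nhds 0) := by
      have hid : Filter.Tendsto (fun ε : ℝ => ε) (nhdsWithin 0 (Set.Ioi 0)) (nhds 0) :=
        Filter.tendsto_id.mono_left nhdsWithin_le_nhds
      simpa using hFlim.sub hid
    have := tendsto_nhds_unique htends1 htends2
    linarith
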